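/- For every natural number n, the number of partitions of n into parts not divisible by m equals the number of partitions of n in which every part appears fewer than m times, for any integer m ≥ 2. -/

import Mathlib

/-- A partition is `m`-regular if no part is divisible by `m`. -/
def Nat.Partition.IsRegular {n : ℕ} (m : ℕ) (P : n.Partition) : Prop :=
  ∀ a ∈ P.parts, ¬ m ∣ a

/-- A partition is `m`-distinct if every part appears fewer than `m` times. -/
def Nat.Partition.IsDistinct {n : ℕ} (m : ℕ) (P : n.Partition) : Prop :=
  ∀ a, P.parts.count a < m

namespace Glaisher
open Multiset

variable {m : ℕ}

lemma sum_digits (m k N : ℕ) :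
    ∑ j ∈ Finset.range N, m ^ j * (k / m ^ j % m) = k % m ^ N := by
  induction N with
  | zero => simp [Nat.mod_one]
  | succ N ih => rw [Finset.sum_range_succ, ih, pow_succ, Nat.mod_mul]

lemma sum_split (m : ℕ) (c : ℕ → ℕ) (N : ℕ) :
    ∑ j ∈ Finset.range (N + 1), m ^ j * c j
      = c 0 + m * ∑ j ∈ Finset.range N, m ^ j * c (j + 1) := by
  rw [Finset.sum_range_succ', pow_zero, one_mul, Finset.mul_sum, add_comm]
  congr 1
  exact Finset.sum_congr rfl fun j _ => by ring

lemma digit_extract (hm : 2 ≤ m) (c : ℕ → ℕ) :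
    ∀ (i N : ℕ), i < N → (∀ j, j < N → c j < m) →
      (∑ j ∈ Finset.range N, m ^ j * c j) / m ^ i % m = c i := by
  intro i
  induction i generalizing c with
  | zero =>
    intro N hi hc
    obtain ⟨N, rfl⟩ : ∃ N', N = N' + 1 := ⟨N - 1, by omega⟩
    rw [sum_split, pow_zero, Nat.div_one, Nat.add_mul_mod_self_left,
      Nat.mod_eq_of_lt (hc 0 (by omega))]
  | succ i ih =>
    intro N hi hc
    obtain ⟨N, rfl⟩ : ∃ N', N = N' + 1 := ⟨N - 1, by omega⟩
    rw [sum_split, pow_succ', ← Nat.div_div_eq_div_mul,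
      Nat.add_mul_div_left _ _ (by omega : 0 < m),
      Nat.div_eq_of_lt (hc 0 (by omega)), zero_add]
    exact ih (fun j => c (j + 1)) N (by omega) (fun j hj => hc (j + 1) (by omega))

/-- `blowM P` replaces each part `b = m^k * a` (`¬ m ∣ a`) by `m^k` copies of `a`. -/
def blowM (m : ℕ) (P : Multiset ℕ) : Multiset ℕ :=
  P.bind fun b => replicate (m ^ m.maxPowDiv b) (b / m ^ m.maxPowDiv b)

lemma core_spec (hm : 2 ≤ m) {b : ℕ} (hb : 0 < b) :
    m ^ m.maxPowDiv b * (b / m ^ m.maxPowDiv b) = b ∧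
      ¬ m ∣ b / m ^ m.maxPowDiv b ∧ 0 < b / m ^ m.maxPowDiv b := by
  have hd : m ^ m.maxPowDiv b ∣ b := Nat.maxPowDiv.pow_dvd
  have h1 : m ^ m.maxPowDiv b * (b / m ^ m.maxPowDiv b) = b := Nat.mul_div_cancel' hd
  refine ⟨h1, fun hcon => ?_, ?_⟩
  · obtain ⟨q, hq⟩ := hcon
    have : m ^ (m.maxPowDiv b + 1) ∣ b :=
      ⟨q, by rw [pow_succ, mul_assoc, ← hq]; exact h1.symm⟩
    have : m.maxPowDiv b + 1 ≤ m.maxPowDiv b := (Nat.pow_dvd_iff_le_padicValNat (p := m) (by omega) hb.ne').mp this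
    omega
  · rcases Nat.eq_zero_or_pos (b / m ^ m.maxPowDiv b) with h | h
    · rw [h, mul_zero] at h1; omega
    · exact h

lemma maxPowDiv_pow_mul (hm : 2 ≤ m) {a : ℕ} (ha : ¬ m ∣ a) (j : ℕ) :
    m.maxPowDiv (m ^ j * a) = j := by
  have ha0 : 0 < a := Nat.pos_of_ne_zero fun h => ha (h ▸ dvd_zero m)
  rw [show m.maxPowDiv (m ^ j * a) = m.maxPowDiv a + j from Nat.maxPowDiv.base_pow_mul (p := m) (by omega) ha0.ne' j]
  have : m.maxPowDiv a = 0 := by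
    by_contra h
    exact ha (dvd_trans (dvd_pow_self m h) (Nat.maxPowDiv.pow_dvd))
  omega

lemma pow_mul_inj (hm : 2 ≤ m) {a a' j j' : ℕ} (ha : ¬ m ∣ a) (ha' : ¬ m ∣ a')
    (h : m ^ j * a = m ^ j' * a') : j = j' ∧ a = a' := by
  have hj : j = j' := by
    have := maxPowDiv_pow_mul hm ha j
    rw [h, maxPowDiv_pow_mul hm ha' j'] at this
    omega
  subst hj
  refine ⟨rfl, ?_⟩
  have hp : 0 < m ^ j := Nat.pow_pos (n := j) (by omega)
  exact Nat.eq_of_mul_eq_mul_left hp h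

lemma count_blow (hm : 2 ≤ m) {a : ℕ} (ha : ¬ m ∣ a) {N : ℕ} (P : Multiset ℕ)
    (hP : ∀ b ∈ P, 0 < b ∧ b < m ^ N) :
    (blowM m P).count a = ∑ j ∈ Finset.range N, m ^ j * P.count (m ^ j * a) := by
  have ha0 : 0 < a := Nat.pos_of_ne_zero fun h => ha (h ▸ dvd_zero m)
  induction P using Multiset.induction with
  | empty => simp [blowM]
  | cons b P ih =>
    have hb := hP b (mem_cons_self b P)
    obtain ⟨hmul, hcore, hcpos⟩ := core_spec hm hb.1
    have key : (replicate (m ^ m.maxPowDiv b) (b / m ^ m.maxPowDiv b)).count a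
        = ∑ j ∈ Finset.range N, (if m ^ j * a = b then m ^ j else 0) := by
      rw [count_replicate]
      by_cases hab : b / m ^ m.maxPowDiv b = a
      · have hbeq : b = m ^ m.maxPowDiv b * a := by conv_lhs => rw [← hmul, hab]
        have hlt : m.maxPowDiv b < N := by
          have h1 : m ^ m.maxPowDiv b ≤ b := Nat.le_of_dvd hb.1 (Nat.maxPowDiv.pow_dvd)
          have h2 : m ^ m.maxPowDiv b < m ^ N := lt_of_le_of_lt h1 hb.2
          exact (Nat.pow_lt_pow_iff_right (by omega)).mp h2
        have hcond : ∀ j, (m ^ j * a = b) ↔ j = m.maxPowDiv b := by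
          intro j
          constructor
          · intro h; exact (pow_mul_inj hm ha (hab ▸ hcore) (h.trans hbeq)).1
          · intro h; rw [h, ← hbeq]
        rw [if_pos hab]
        simp only [hcond]
        rw [Finset.sum_ite_eq' (Finset.range N) (m.maxPowDiv b) (fun j => m ^ j),
          if_pos (Finset.mem_range.mpr hlt)]
      · rw [if_neg hab]
        refine (Finset.sum_eq_zero fun j _ => if_neg fun h => hab ?_).symm
        have hj := maxPowDiv_pow_mul hm ha j
        rw [h] at hj
        rw [hj, ← h, Nat.mul_div_cancel_left _ (Nat.pow_pos (n := j) (by omega))]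
    rw [blowM, Multiset.cons_bind, count_add, ← blowM,
      ih (fun x hx => hP x (mem_cons_of_mem hx)), key, ← Finset.sum_add_distrib]
    refine Finset.sum_congr rfl fun j _ => ?_
    rw [count_cons]
    split_ifs with h <;> ring

lemma mem_blowM (hm : 2 ≤ m) {P : Multiset ℕ} (hpos : ∀ b ∈ P, 0 < b) {c : ℕ}
    (hc : c ∈ blowM m P) : 0 < c ∧ ¬ m ∣ c := by
  rw [blowM, Multiset.mem_bind] at hc
  obtain ⟨b, hb, hcb⟩ := hc
  obtain ⟨_, h2, h3⟩ := core_spec hm (hpos b hb)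
  rw [Multiset.eq_of_mem_replicate hcb]
  exact ⟨h3, h2⟩

lemma sum_blowM (hm : 2 ≤ m) {P : Multiset ℕ} (hpos : ∀ b ∈ P, 0 < b) :
    (blowM m P).sum = P.sum := by
  rw [blowM, Multiset.sum_bind]
  have : ∀ b ∈ P, (replicate (m ^ m.maxPowDiv b) (b / m ^ m.maxPowDiv b)).sum = id b := by
    intro b hb
    rw [Multiset.sum_replicate, smul_eq_mul]
    exact (core_spec hm (hpos b hb)).1
  rw [Multiset.map_congr rfl this, Multiset.map_id]

/-- `psiM N P` gives each value `m^j * a` (for `a ∈ P`) the multiplicity equal to the `j`-th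
base-`m` digit of the multiplicity of `a` in `P`. -/
def psiM (m N : ℕ) (P : Multiset ℕ) : Multiset ℕ :=
  ∑ a ∈ P.toFinset, ∑ j ∈ Finset.range N, replicate (P.count a / m ^ j % m) (m ^ j * a)

lemma mem_psiM {N : ℕ} {P : Multiset ℕ} {c : ℕ} (hc : c ∈ psiM m N P) :
    ∃ a ∈ P, ∃ j < N, c = m ^ j * a := by
  rw [psiM, Multiset.mem_sum] at hc
  obtain ⟨a, ha, hc⟩ := hc
  rw [Multiset.mem_sum] at hc
  obtain ⟨j, hj, hc⟩ := hc
  exact ⟨a, Multiset.mem_toFinset.mp ha, j, Finset.mem_range.mp hj,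
    Multiset.eq_of_mem_replicate hc⟩

lemma sum_finset_sum {α : Type*} (s : Finset α) (f : α → Multiset ℕ) :
    (∑ i ∈ s, f i).sum = ∑ i ∈ s, (f i).sum := by
  classical
  induction s using Finset.induction with
  | empty => simp
  | insert _ _ h ih => simp [Finset.sum_insert h, ih]

lemma sum_psiM (hm : 2 ≤ m) {N : ℕ} {P : Multiset ℕ} (hN : ∀ a, P.count a < m ^ N) :
    (psiM m N P).sum = P.sum := by
  rw [psiM, sum_finset_sum]
  have key : ∀ a ∈ P.toFinset,
      (∑ j ∈ Finset.range N, replicate (P.count a / m ^ j % m) (m ^ j * a)).sum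
      = P.count a • (id a) := by
    intro a _
    rw [sum_finset_sum]
    have : ∀ j ∈ Finset.range N, (replicate (P.count a / m ^ j % m) (m ^ j * a)).sum
        = (m ^ j * (P.count a / m ^ j % m)) * a := by
      intro j _
      rw [Multiset.sum_replicate, smul_eq_mul]; ring
    rw [Finset.sum_congr rfl this, ← Finset.sum_mul, sum_digits,
      Nat.mod_eq_of_lt (hN a), smul_eq_mul, id]
  rw [Finset.sum_congr rfl key, ← Finset.sum_multiset_map_count P id, Multiset.map_id]

lemma count_psiM (hm : 2 ≤ m) {N : ℕ} {P : Multiset ℕ} (hreg : ∀ b ∈ P, ¬ m ∣ b)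
    (hN : ∀ a, P.count a < m ^ N) {a : ℕ} (ha : ¬ m ∣ a) (j : ℕ) :
    (psiM m N P).count (m ^ j * a) = P.count a / m ^ j % m := by
  rw [psiM, Multiset.count_sum']
  have inner : ∀ a', a' ∈ P.toFinset →
      (∑ j' ∈ Finset.range N, replicate (P.count a' / m ^ j' % m) (m ^ j' * a')).count (m ^ j * a)
      = if a' = a then P.count a / m ^ j % m else 0 := by
    intro a' ha'
    have hra' : ¬ m ∣ a' := hreg a' (Multiset.mem_toFinset.mp ha')
    rw [Multiset.count_sum']
    by_cases haa : a' = a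
    · subst haa
      rw [if_pos rfl]
      by_cases hj : j < N
      · rw [Finset.sum_eq_single_of_mem j (Finset.mem_range.mpr hj)]
        · rw [Multiset.count_replicate, if_pos rfl]
        · intro j' _ hj'
          rw [Multiset.count_replicate, if_neg]
          intro h
          exact hj' (pow_mul_inj hm hra' ha h).1
      · have h0 : P.count a' / m ^ j = 0 := by
          apply Nat.div_eq_of_lt
          calc P.count a' < m ^ N := hN a'
            _ ≤ m ^ j := Nat.pow_le_pow_right (by omega) (by omega)
        rw [h0, Nat.zero_mod]
        refine Finset.sum_eq_zero fun j' hj' => ?_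
        rw [Multiset.count_replicate, if_neg]
        intro h
        have := (pow_mul_inj hm hra' ha h).1
        rw [Finset.mem_range] at hj'
        omega
    · rw [if_neg haa]
      refine Finset.sum_eq_zero fun j' _ => ?_
      rw [Multiset.count_replicate, if_neg]
      intro h
      exact haa (pow_mul_inj hm hra' ha h).2
  rw [Finset.sum_congr rfl inner]
  by_cases hmem : a ∈ P.toFinset
  · rw [Finset.sum_ite_eq' P.toFinset a (fun _ => P.count a / m ^ j % m), if_pos hmem]
  · rw [Finset.sum_ite_eq' P.toFinset a (fun _ => P.count a / m ^ j % m), if_neg hmem]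
    rw [Multiset.count_eq_zero_of_notMem (fun h => hmem (Multiset.mem_toFinset.mpr h)),
      Nat.zero_div, Nat.zero_mod]

lemma card_le_sum (s : Multiset ℕ) (hpos : ∀ b ∈ s, 0 < b) : Multiset.card s ≤ s.sum := by
  induction s using Multiset.induction with
  | empty => simp
  | cons b s ih =>
    have hb := hpos b (mem_cons_self b s)
    have := ih fun x hx => hpos x (mem_cons_of_mem hx)
    simp only [Multiset.card_cons, Multiset.sum_cons]
    omega

lemma count_le_sum (s : Multiset ℕ) (hpos : ∀ b ∈ s, 0 < b) (a : ℕ) :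
    s.count a ≤ s.sum :=
  le_trans (Multiset.count_le_card a s) (card_le_sum s hpos)

variable {n : ℕ}

lemma n_lt_pow (hm : 2 ≤ m) (n : ℕ) : n < m ^ (n + 1) :=
  lt_of_lt_of_le (Nat.lt_pow_self (n := n) (by omega)) (Nat.pow_le_pow_right (by omega) (by omega))

/-- The Glaisher map from (distinct) partitions to regular partitions. -/
def phiPart (hm : 2 ≤ m) (P : n.Partition) : n.Partition where
  parts := blowM m P.parts
  parts_pos := fun hi => (mem_blowM hm (fun _ hb => P.parts_pos hb) hi).1
  parts_sum := by rw [sum_blowM hm (fun _ hb => P.parts_pos hb), P.parts_sum]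

lemma parts_count_lt (hm : 2 ≤ m) (P : n.Partition) (a : ℕ) :
    P.parts.count a < m ^ (n + 1) :=
  lt_of_le_of_lt (by
    have := count_le_sum P.parts (fun _ hb => P.parts_pos hb) a
    rw [P.parts_sum] at this
    exact this) (n_lt_pow hm n)

/-- The Glaisher map from regular partitions to (distinct) partitions. -/
def psiPart (hm : 2 ≤ m) (P : n.Partition) : n.Partition where
  parts := psiM m (n + 1) P.parts
  parts_pos := fun hi => by
    obtain ⟨a, ha, j, _, rfl⟩ := mem_psiM hi
    exact Nat.mul_pos (Nat.pow_pos (n := j) (by omega)) (P.parts_pos ha)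
  parts_sum := by rw [sum_psiM hm (parts_count_lt hm P), P.parts_sum]

lemma phiPart_regular (hm : 2 ≤ m) (P : n.Partition) : (phiPart hm P).IsRegular m :=
  fun a ha => (mem_blowM hm (fun _ hb => P.parts_pos hb) ha).2

lemma psiPart_distinct (hm : 2 ≤ m) (P : n.Partition) (hreg : P.IsRegular m) :
    (psiPart hm P).IsDistinct m := by
  intro b
  rcases Nat.eq_zero_or_pos b with rfl | hb
  · rw [Multiset.count_eq_zero_of_notMem]
    · omega
    · intro h
      obtain ⟨a, ha, j, _, hj⟩ := mem_psiM h
      exact absurd hj.symm (Nat.mul_ne_zero (by positivity) (P.parts_pos ha).ne')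
  · obtain ⟨hmul, hcore, _⟩ := core_spec hm hb
    have : (psiPart hm P).parts.count b
        = P.parts.count (b / m ^ m.maxPowDiv b) / m ^ m.maxPowDiv b % m := by
      conv_lhs => rw [← hmul]
      exact count_psiM hm hreg (parts_count_lt hm P) hcore _
    rw [this]
    exact Nat.mod_lt _ (by omega)

lemma phi_psi (hm : 2 ≤ m) (P : n.Partition) (hreg : P.IsRegular m) :
    phiPart hm (psiPart hm P) = P := by
  have hposP : ∀ b ∈ P.parts, 0 < b := fun _ hb => P.parts_pos hb
  apply Nat.Partition.ext
  rw [Multiset.ext]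
  intro a
  by_cases ha : m ∣ a
  · rw [Multiset.count_eq_zero_of_notMem, Multiset.count_eq_zero_of_notMem]
    · exact fun h => hreg a h ha
    · exact fun h => (mem_blowM hm (fun _ hb => (psiPart hm P).parts_pos hb) h).2 ha
  · -- bound for the parts of psiPart
    have hbound : ∀ b ∈ (psiPart hm P).parts, 0 < b ∧ b < m ^ (2 * n + 2) := by
      intro b hb
      refine ⟨(psiPart hm P).parts_pos hb, ?_⟩
      obtain ⟨a', ha', j, hjn, rfl⟩ := mem_psiM hb
      have h1 : a' ≤ n := by
        have := Multiset.le_sum_of_mem ha'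
        rwa [P.parts_sum] at this
      have h2 : m ^ j ≤ m ^ n := Nat.pow_le_pow_right (by omega) (by omega)
      have h3 : a' < m ^ (n + 1) := lt_of_le_of_lt h1 (n_lt_pow hm n)
      calc m ^ j * a' ≤ m ^ n * a' := Nat.mul_le_mul_right _ h2
        _ < m ^ n * m ^ (n + 1) := (Nat.mul_lt_mul_left (Nat.pow_pos (n := n) (by omega))).2 h3
        _ ≤ m ^ (2 * n + 2) := by
            rw [← pow_add]
            exact Nat.pow_le_pow_right (by omega) (by omega)
    show (blowM m (psiPart hm P).parts).count a = P.parts.count a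
    rw [count_blow hm ha _ hbound]
    have hc : ∀ j, (psiPart hm P).parts.count (m ^ j * a) = P.parts.count a / m ^ j % m :=
      fun j => count_psiM hm hreg (parts_count_lt hm P) ha j
    rw [Finset.sum_congr rfl fun j _ => by rw [hc j], sum_digits, Nat.mod_eq_of_lt]
    calc P.parts.count a < m ^ (n + 1) := parts_count_lt hm P a
      _ ≤ m ^ (2 * n + 2) := Nat.pow_le_pow_right (by omega) (by omega)

lemma psi_phi (hm : 2 ≤ m) (P : n.Partition) (hdis : P.IsDistinct m) :
    psiPart hm (phiPart hm P) = P := by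
  have hposP : ∀ b ∈ P.parts, 0 < b := fun _ hb => P.parts_pos hb
  apply Nat.Partition.ext
  rw [Multiset.ext]
  intro b
  rcases Nat.eq_zero_or_pos b with rfl | hb
  · rw [Multiset.count_eq_zero_of_notMem, Multiset.count_eq_zero_of_notMem]
    · exact fun h => (P.parts_pos h).ne' rfl
    · exact fun h => ((psiPart hm (phiPart hm P)).parts_pos h).ne' rfl
  · obtain ⟨hmul, hcore, hapos⟩ := core_spec hm hb
    set k := m.maxPowDiv b with hk
    set a := b / m ^ m.maxPowDiv b with hadef
    have hregphi : (phiPart hm P).IsRegular m := phiPart_regular hm P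
    have hboundP : ∀ x ∈ P.parts, 0 < x ∧ x < m ^ (n + 1) := by
      intro x hx
      refine ⟨P.parts_pos hx, ?_⟩
      have := Multiset.le_sum_of_mem hx
      rw [P.parts_sum] at this
      exact lt_of_le_of_lt this (n_lt_pow hm n)
    have step1 : (psiPart hm (phiPart hm P)).parts.count b
        = (phiPart hm P).parts.count a / m ^ k % m := by
      conv_lhs => rw [← hmul]
      exact count_psiM hm hregphi (parts_count_lt hm (phiPart hm P)) hcore k
    have step2 : (phiPart hm P).parts.count a
        = ∑ j ∈ Finset.range (n + 1), m ^ j * P.parts.count (m ^ j * a) :=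
      count_blow hm hcore _ hboundP
    rw [step1, step2]
    by_cases hkn : k < n + 1
    · rw [digit_extract hm _ k (n + 1) hkn (fun j _ => hdis _)]
      conv_rhs => rw [← hmul]
    · -- b is too large to be a part; both sides are zero
      have hsum_lt : ∑ j ∈ Finset.range (n + 1), m ^ j * P.parts.count (m ^ j * a)
          < m ^ (n + 1) := by
        rw [← step2]
        exact parts_count_lt hm (phiPart hm P) a
      have hdiv0 : (∑ j ∈ Finset.range (n + 1), m ^ j * P.parts.count (m ^ j * a)) / m ^ k = 0 :=
        Nat.div_eq_of_lt (lt_of_lt_of_le hsum_lt (Nat.pow_le_pow_right (by omega) (by omega)))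
      rw [hdiv0, Nat.zero_mod]
      symm
      rw [Multiset.count_eq_zero_of_notMem]
      intro hmem
      have hble : b ≤ n := by
        have := Multiset.le_sum_of_mem hmem
        rwa [P.parts_sum] at this
      have : m ^ (n + 1) ≤ b := by
        calc m ^ (n + 1) ≤ m ^ k := Nat.pow_le_pow_right (by omega) (by omega)
          _ ≤ m ^ k * a := Nat.le_mul_of_pos_right _ hapos
          _ = b := hmul
      have := n_lt_pow hm n
      omega

end Glaisher

/-- Glaisher's theorem: the number of partitions of `n` into parts not divisible
by `m` equals the number of partitions of `n` in which every part appears fewer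
than `m` times. -/
theorem glaisher (m : ℕ) (hm : 2 ≤ m) (n : ℕ) :
    Nat.card {P : n.Partition // P.IsRegular m} =
      Nat.card {P : n.Partition // P.IsDistinct m} := by
  refine Nat.card_congr ⟨fun P => ⟨Glaisher.psiPart hm P.1, Glaisher.psiPart_distinct hm P.1 P.2⟩,
    fun Q => ⟨Glaisher.phiPart hm Q.1, Glaisher.phiPart_regular hm Q.1⟩, ?_, ?_⟩
  · intro P
    exact Subtype.ext (Glaisher.phi_psi hm P.1 P.2)
  · intro Q
    exact Subtype.ext (Glaisher.psi_phi hm Q.1 Q.2)
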